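/- For every positive integer n, Σ_{k even, 1 ≤ k ≤ n+1} k·c(n+1,k) = ((n+1)!/2)·(1/(n(n+1)) + H_{n+1}). -/

import Mathlib

open Finset
open scoped Classical

/-- Number of cycles of a permutation, counting fixed points as cycles of length 1. -/
noncomputable def cycleCount {α : Type*} [Fintype α] [DecidableEq α] (σ : Equiv.Perm α) : ℕ :=
  σ.cycleType.card + (Finset.univ.filter fun x => σ x = x).card

/-- The full cycle type of a permutation, including parts of size 1 for fixed points. -/
noncomputable def fullCycleType {α : Type*} [Fintype α] [DecidableEq α] (σ : Equiv.Perm α) :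
    Multiset ℕ :=
  σ.cycleType + Multiset.replicate (Finset.univ.filter fun x => σ x = x).card 1

/-- The set of full `n`-cycles in the symmetric group on `Fin n`. -/
noncomputable def fullCycles (n : ℕ) : Finset (Equiv.Perm (Fin n)) :=
  Finset.univ.filter fun σ => fullCycleType σ = {n}

/-- Unsigned Stirling number of the first kind: the number of permutations of `m`
elements with exactly `k` cycles. -/
noncomputable def stirling1 (m k : ℕ) : ℕ :=
  (Finset.univ.filter fun σ : Equiv.Perm (Fin m) => cycleCount σ = k).card

/-- `m`-th harmonic number as a real. -/
noncomputable def Hsum (m : ℕ) : ℝ := ∑ i ∈ Finset.range m, (1 : ℝ) / (i + 1)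

section Aux

open Equiv Equiv.Perm

variable {α : Type*} [Fintype α] [DecidableEq α]

lemma fix_card (σ : Perm α) :
    (Finset.univ.filter fun x => σ x = x).card + σ.support.card = Fintype.card α := by
  classical
  rw [Equiv.Perm.support]
  rw [← Finset.card_univ,
    ← Finset.card_filter_add_card_filter_not (s := (univ : Finset α))
      (p := fun x => σ x = x)]

lemma cc_supp (σ : Perm α) :
    cycleCount σ + σ.support.card = Multiset.card σ.cycleType + Fintype.card α := by
  rw [cycleCount, ← fix_card σ]; ring

lemma insert_cycle {c : Perm α} (hc : c.IsCycle) {a b : α} (hab : a ≠ b)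
    (hca : c a = a) (hcb : c b ≠ b) :
    (swap a b * c).IsCycle ∧ (swap a b * c).support = insert a c.support := by
  set F := swap a b * c with hF
  have hFa : F a = b := by simp [hF, Perm.mul_apply, hca]
  have hFx : ∀ x, x ≠ a → F x = if c x = b then a else c x := by
    intro x hx
    have h1 : c x ≠ a := fun h => hx (c.injective (h.trans hca.symm))
    by_cases h2 : c x = b
    · simp [hF, Perm.mul_apply, h2]
    · simp [hF, Perm.mul_apply, swap_apply_of_ne_of_ne h1 h2, h2]
  have hsupp : F.support = insert a c.support := by
    ext x
    rcases eq_or_ne x a with rfl | hx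
    · simp only [Finset.mem_insert, true_or, iff_true, Perm.mem_support, hFa]
      exact hab.symm
    · rw [Perm.mem_support, hFx x hx, Finset.mem_insert]
      by_cases h2 : c x = b
      · have hxb : x ≠ b := by rintro rfl; exact hcb h2
        simp only [h2, if_true]
        constructor
        · intro _; right; rw [Perm.mem_support, h2]; exact Ne.symm hxb
        · intro _; exact Ne.symm hx
      · simp [h2, Perm.mem_support, hx]
  have hpow : ∀ k : ℕ, ∃ j : ℕ, (F ^ j) a = (c ^ k) b := by
    intro k
    induction k with
    | zero => exact ⟨1, by simpa using hFa⟩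
    | succ k ih =>
      obtain ⟨j, hj⟩ := ih
      have hya : (c ^ k) b ≠ a := by
        intro h
        have hak : (c ^ k) a = a := Perm.pow_apply_eq_self_of_apply_eq_self hca k
        exact hab ((c ^ k).injective (hak.trans h.symm))
      by_cases hcy : c ((c ^ k) b) = b
      · refine ⟨1, ?_⟩
        rw [pow_one, hFa, pow_succ', Perm.mul_apply, hcy]
      · refine ⟨j + 1, ?_⟩
        rw [pow_succ', Perm.mul_apply, hj, hFx _ hya, if_neg hcy, pow_succ', Perm.mul_apply]
  constructor
  · refine ⟨a, by rw [hFa]; exact hab.symm, fun y hy => ?_⟩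
    have : y ∈ F.support := Perm.mem_support.2 hy
    rw [hsupp, Finset.mem_insert] at this
    rcases this with rfl | hy'
    · exact Equiv.Perm.SameCycle.refl _ _
    · obtain ⟨k, hk⟩ := hc.exists_pow_eq hcb (Perm.mem_support.1 hy')
      obtain ⟨j, hj⟩ := hpow k
      exact ⟨(j : ℤ), by rw [zpow_natCast, hj, hk]⟩
  · exact hsupp

lemma cc_swap_mul (σ : Perm α) {a b : α} (ha : σ a = a) (hab : a ≠ b) :
    cycleCount σ = cycleCount (swap a b * σ) + 1 := by
  have haσ : a ∉ σ.support := by simp [Perm.mem_support, ha]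
  by_cases hb : σ b = b
  -- disjoint case
  · have hd : (swap a b).Disjoint σ := by
      intro x
      rcases eq_or_ne x a with rfl | hxa
      · right; exact ha
      rcases eq_or_ne x b with rfl | hxb
      · right; exact hb
      · left; exact swap_apply_of_ne_of_ne hxa hxb
    have hct : (swap a b * σ).cycleType = (swap a b).cycleType + σ.cycleType :=
      hd.cycleType_mul
    have hctswap : (swap a b).cycleType = {2} := by
      rw [(isCycle_swap hab).cycleType, card_support_swap hab]
    have hsupp : (swap a b * σ).support = {a, b} ∪ σ.support := by
      rw [hd.support_mul, support_swap hab]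
    have hbσ : b ∉ σ.support := by simp [Perm.mem_support, hb]
    have hcard : (swap a b * σ).support.card = σ.support.card + 2 := by
      rw [hsupp, Finset.card_union_of_disjoint, Finset.card_pair hab, add_comm]
      simp only [Finset.disjoint_left, Finset.mem_insert, Finset.mem_singleton]
      rintro x (rfl | rfl) <;> simp [Perm.mem_support, ha, hb]
    have e1 := cc_supp σ
    have e2 := cc_supp (swap a b * σ)
    have e4 : Multiset.card (swap a b * σ).cycleType = Multiset.card σ.cycleType + 1 := by
      rw [hct, hctswap]; simp [add_comm]
    omega
  -- merge case
  · set c := σ.cycleOf b with hcdef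
    have hc : c.IsCycle := isCycle_cycleOf σ hb
    have hmem : c ∈ σ.cycleFactorsFinset := cycleOf_mem_cycleFactorsFinset_iff.mpr (Perm.mem_support.2 hb)
    have hsub : c.support ⊆ σ.support := support_cycleOf_le σ b
    have hca : c a = a := by
      have : a ∉ c.support := fun h => haσ (hsub h)
      simpa [Perm.mem_support, not_not] using this
    have hcb : c b ≠ b := by rwa [hcdef, cycleOf_apply_self]
    set d := σ * c⁻¹ with hddef
    have hdc : d.Disjoint c := disjoint_mul_inv_of_mem_cycleFactorsFinset hmem
    have hcd : c.Disjoint d := hdc.symm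
    have hσ : σ = c * d := by
      rw [hddef, ← hdc.commute.eq, inv_mul_cancel_right]
    have hsuppd : d.support ⊆ σ.support := by
      intro x hx
      have := Perm.support_mul_le σ c⁻¹ hx
      rw [Perm.support_inv] at this
      rcases Finset.mem_union.1 this with h | h
      · exact h
      · exact hsub h
    obtain ⟨hFc, hFsupp⟩ := insert_cycle hc hab hca hcb
    have hprod : swap a b * σ = (swap a b * c) * d := by rw [hσ, mul_assoc]
    have had : a ∉ d.support := fun h => haσ (hsuppd h)
    have hFd : (swap a b * c).Disjoint d := by
      rw [Perm.disjoint_iff_disjoint_support, hFsupp]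
      rw [Finset.disjoint_left]
      intro x hx
      rcases Finset.mem_insert.1 hx with rfl | hx'
      · exact had
      · exact fun h => (Perm.disjoint_iff_disjoint_support.1 hcd).forall_ne_finset hx' h rfl
    have hct : (swap a b * σ).cycleType = (swap a b * c).cycleType + d.cycleType := by
      rw [hprod, hFd.cycleType_mul]
    have e4 : Multiset.card (swap a b * σ).cycleType = Multiset.card σ.cycleType := by
      rw [hct, hσ, hcd.cycleType_mul, hFc.cycleType, hc.cycleType]
      simp
    have hsuppσ : σ.support = c.support ∪ d.support := by rw [hσ, hcd.support_mul]
    have hsuppF : (swap a b * σ).support = insert a σ.support := by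
      rw [hprod, hFd.support_mul, hFsupp, hsuppσ, Finset.insert_union]
    have e3 : (swap a b * σ).support.card = σ.support.card + 1 := by
      rw [hsuppF, Finset.card_insert_of_notMem haσ]
    have e1 := cc_supp σ
    have e2 := cc_supp (swap a b * σ)
    omega

def finSuccNeZero (n : ℕ) : Fin n ≃ {x : Fin (n + 1) // x ≠ 0} where
  toFun x := ⟨x.succ, x.succ_ne_zero⟩
  invFun y := (y : Fin (n + 1)).pred y.2
  left_inv x := by simp
  right_inv y := by simp

lemma decomposeFin_zero_eq {n : ℕ} (e : Perm (Fin n)) :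
    Equiv.Perm.decomposeFin.symm (0, e) = e.extendDomain (finSuccNeZero n) := by
  ext x
  refine Fin.cases ?_ (fun i => ?_) x
  · rw [Equiv.Perm.decomposeFin_symm_apply_zero,
      Perm.extendDomain_apply_not_subtype _ _ (by simp)]
  · rw [Equiv.Perm.decomposeFin_symm_apply_succ]
    have : (i.succ : Fin (n + 1)) = ((finSuccNeZero n) i : Fin (n + 1)) := rfl
    rw [this, swap_self]
    have h2 := Perm.extendDomain_apply_image (e := e) (f := finSuccNeZero n) (a := i)
    simp only [h2]
    rfl

lemma cc_E {n : ℕ} (e : Perm (Fin n)) :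
    cycleCount (Equiv.Perm.decomposeFin.symm (0, e)) = cycleCount e + 1 := by
  have hct : (Equiv.Perm.decomposeFin.symm (0, e)).cycleType = e.cycleType := by
    rw [decomposeFin_zero_eq]; exact Equiv.Perm.cycleType_extendDomain _
  have hfix : (Finset.univ.filter fun x => Equiv.Perm.decomposeFin.symm (0, e) x = x).card
      = (Finset.univ.filter fun x => e x = x).card + 1 := by
    rw [Finset.card_filter, Finset.card_filter, Fin.sum_univ_succ]
    have h0 : Equiv.Perm.decomposeFin.symm (0, e) (0 : Fin (n + 1)) = 0 :=
      Equiv.Perm.decomposeFin_symm_apply_zero 0 e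
    rw [if_pos h0]
    have hs : ∀ i : Fin n,
        (if Equiv.Perm.decomposeFin.symm (0, e) i.succ = i.succ then 1 else 0)
          = (if e i = i then 1 else 0) := by
      intro i
      rw [Equiv.Perm.decomposeFin_symm_apply_succ, swap_self]
      simp [Fin.succ_inj]
    rw [Finset.sum_congr rfl fun i _ => hs i]
    ring
  rw [cycleCount, cycleCount, hct, hfix]
  ring

lemma cc_decomposeFin {n : ℕ} (p : Fin (n + 1)) (e : Perm (Fin n)) :
    cycleCount (Equiv.Perm.decomposeFin.symm (p, e))
      = cycleCount e + (if p = 0 then 1 else 0) := by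
  by_cases hp : p = 0
  · subst hp; rw [if_pos rfl, cc_E]
  · rw [if_neg hp]
    have hprod : Equiv.Perm.decomposeFin.symm (p, e)
        = swap 0 p * Equiv.Perm.decomposeFin.symm (0, e) := by
      ext x
      refine Fin.cases ?_ (fun i => ?_) x
      · rw [Equiv.Perm.decomposeFin_symm_apply_zero, Perm.mul_apply,
          Equiv.Perm.decomposeFin_symm_apply_zero, swap_apply_left]
      · rw [Equiv.Perm.decomposeFin_symm_apply_succ, Perm.mul_apply,
          Equiv.Perm.decomposeFin_symm_apply_succ, swap_self]
        rfl
    have h0 : Equiv.Perm.decomposeFin.symm (0, e) (0 : Fin (n + 1)) = 0 :=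
      Equiv.Perm.decomposeFin_symm_apply_zero 0 e
    have := cc_swap_mul (Equiv.Perm.decomposeFin.symm (0, e)) h0 (Ne.symm hp)
    have h2 := cc_E e
    rw [← hprod] at this
    omega

noncomputable def Ssum (m : ℕ) : ℝ := ∑ σ : Perm (Fin m), (cycleCount σ : ℝ)
noncomputable def Csum (m : ℕ) : ℝ := ∑ σ : Perm (Fin m), (-1 : ℝ) ^ (cycleCount σ)
noncomputable def Tsum (m : ℕ) : ℝ :=
  ∑ σ : Perm (Fin m), (-1 : ℝ) ^ (cycleCount σ) * (cycleCount σ : ℝ)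

lemma sum_perm_succ {m : ℕ} (f : Perm (Fin (m + 1)) → ℝ) :
    ∑ σ : Perm (Fin (m + 1)), f σ =
      ∑ p : Fin (m + 1), ∑ e : Perm (Fin m), f (Equiv.Perm.decomposeFin.symm (p, e)) := by
  rw [Finset.univ_perm_fin_succ, Finset.sum_map]
  exact Fintype.sum_prod_type ..

lemma Ssum_succ (m : ℕ) : Ssum (m + 1) = (m + 1) * Ssum m + (Nat.factorial m : ℝ) := by
  rw [Ssum, sum_perm_succ]
  have : ∀ p : Fin (m + 1), ∑ e : Perm (Fin m),
      ((cycleCount (Equiv.Perm.decomposeFin.symm (p, e)) : ℝ))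
        = Ssum m + (if p = 0 then (Nat.factorial m : ℝ) else 0) := by
    intro p
    by_cases hp : p = 0 <;>
      simp [cc_decomposeFin, hp, Finset.sum_add_distrib, Ssum, Finset.card_univ,
        Fintype.card_perm]
  rw [Finset.sum_congr rfl fun p _ => this p, Finset.sum_add_distrib]
  simp [Finset.card_univ, mul_comm]

lemma Csum_succ (m : ℕ) : Csum (m + 1) = m * Csum m - Csum m := by
  rw [Csum, sum_perm_succ]
  have : ∀ p : Fin (m + 1), ∑ e : Perm (Fin m),
      (-1 : ℝ) ^ (cycleCount (Equiv.Perm.decomposeFin.symm (p, e)))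
        = (if p = 0 then -Csum m else Csum m) := by
    intro p
    by_cases hp : p = 0 <;> simp [cc_decomposeFin, hp, pow_succ, Csum]
  rw [Finset.sum_congr rfl fun p _ => this p, Finset.sum_ite]
  simp [Finset.filter_eq', Finset.filter_ne', Finset.card_erase_of_mem, Finset.card_univ]
  ring

lemma Tsum_succ (m : ℕ) : Tsum (m + 1) = m * Tsum m - Tsum m - Csum m := by
  rw [Tsum, sum_perm_succ]
  have : ∀ p : Fin (m + 1), ∑ e : Perm (Fin m),
      (-1 : ℝ) ^ (cycleCount (Equiv.Perm.decomposeFin.symm (p, e)))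
          * (cycleCount (Equiv.Perm.decomposeFin.symm (p, e)) : ℝ)
        = (if p = 0 then -Tsum m - Csum m else Tsum m) := by
    intro p
    by_cases hp : p = 0
    · simp only [cc_decomposeFin, hp, if_pos rfl, eq_self_iff_true, if_true]
      rw [Tsum, Csum, ← Finset.sum_neg_distrib, ← Finset.sum_sub_distrib]
      apply Finset.sum_congr rfl
      intro e _
      push_cast
      rw [pow_succ]
      ring
    · simp [cc_decomposeFin, hp, Tsum]
  rw [Finset.sum_congr rfl fun p _ => this p, Finset.sum_ite]
  simp [Finset.filter_eq', Finset.filter_ne', Finset.card_erase_of_mem, Finset.card_univ]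
  ring

lemma cc_fin0 (σ : Perm (Fin 0)) : cycleCount σ = 0 := by
  have h : σ = 1 := by ext x; exact x.elim0
  subst h
  simp [cycleCount, cycleType_one]

lemma cc_fin1 (σ : Perm (Fin 1)) : cycleCount σ = 1 := by
  have h : σ = 1 := by ext x; simp [Subsingleton.elim (σ x) x]
  subst h
  simp [cycleCount, cycleType_one]

lemma Ssum_eq (m : ℕ) : Ssum m = (Nat.factorial m : ℝ) * Hsum m := by
  induction m with
  | zero => simp [Ssum, Hsum, cc_fin0]
  | succ m ih =>
    have hH : Hsum (m + 1) = Hsum m + 1 / ((m : ℝ) + 1) := by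
      rw [Hsum, Hsum, Finset.sum_range_succ]
    rw [Ssum_succ, ih, hH, Nat.factorial_succ]
    push_cast
    have hm : (m : ℝ) + 1 ≠ 0 := by positivity
    field_simp

lemma Csum_one : Csum 1 = -1 := by
  simp [Csum, cc_fin1]

lemma Tsum_one : Tsum 1 = -1 := by
  simp [Tsum, cc_fin1]

lemma Csum_eq (m : ℕ) (hm : 2 ≤ m) : Csum m = 0 := by
  induction m with
  | zero => omega
  | succ m ih =>
    rcases Nat.lt_or_ge m 2 with h | h
    · interval_cases m
      · omega
      · rw [Csum_succ, Csum_one]; norm_num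
    · rw [Csum_succ, ih h]; ring

lemma Tsum_eq (m : ℕ) : Tsum (m + 2) = (Nat.factorial m : ℝ) := by
  induction m with
  | zero => rw [Tsum_succ, Tsum_one, Csum_one]; norm_num
  | succ m ih =>
    rw [Tsum_succ, ih, Csum_eq (m + 2) (by omega), Nat.factorial_succ]
    push_cast
    ring

lemma cc_pos {β : Type*} [Fintype β] [DecidableEq β] (σ : Perm β) (h : 0 < Fintype.card β) :
    1 ≤ cycleCount σ := by
  by_contra h'
  have h0 : cycleCount σ = 0 := by omega
  rw [cycleCount] at h0
  have h1 : Multiset.card σ.cycleType = 0 := by omega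
  have h2 : σ = 1 := card_cycleType_eq_zero.1 h1
  subst h2
  have h3 : (Finset.univ.filter fun x => (1 : Perm β) x = x) = Finset.univ := by simp
  rw [h3, Finset.card_univ] at h0
  omega

lemma cc_le (σ : Perm α) : cycleCount σ ≤ Fintype.card α := by
  have h1 : Multiset.card σ.cycleType • 2 ≤ σ.cycleType.sum :=
    Multiset.card_nsmul_le_sum fun x hx => two_le_of_mem_cycleType hx
  rw [smul_eq_mul] at h1
  have h2 := sum_cycleType σ
  have h3 := cc_supp σ
  omega

lemma even_sum (m : ℕ) :
    ∑ σ ∈ Finset.univ.filter (fun σ : Perm (Fin m) => Even (cycleCount σ)),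
      (cycleCount σ : ℝ) = (Ssum m + Tsum m) / 2 := by
  have key : ∀ σ : Perm (Fin m),
      (if Even (cycleCount σ) then (cycleCount σ : ℝ) else 0)
        = ((cycleCount σ : ℝ) + (-1 : ℝ) ^ (cycleCount σ) * (cycleCount σ : ℝ)) / 2 := by
    intro σ
    by_cases h : Even (cycleCount σ)
    · rw [if_pos h, h.neg_one_pow]; ring
    · rw [if_neg h, (Nat.not_even_iff_odd.1 h).neg_one_pow]; ring
  rw [Finset.sum_filter, Finset.sum_congr rfl fun σ _ => key σ, ← Finset.sum_div,
    Finset.sum_add_distrib]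
  rfl

lemma fiber_sum (m : ℕ) (hm : 0 < m) :
    ∑ k ∈ (Finset.Icc 1 m).filter (fun k => Even k), (k : ℝ) * (stirling1 m k : ℝ)
      = ∑ σ ∈ Finset.univ.filter (fun σ : Perm (Fin m) => Even (cycleCount σ)),
          (cycleCount σ : ℝ) := by
  have hmaps : ∀ σ ∈ Finset.univ.filter (fun σ : Perm (Fin m) => Even (cycleCount σ)),
      cycleCount σ ∈ (Finset.Icc 1 m).filter (fun k => Even k) := by
    intro σ hσ
    rw [Finset.mem_filter] at hσ ⊢
    refine ⟨Finset.mem_Icc.2 ⟨cc_pos σ (by simpa using hm), ?_⟩, hσ.2⟩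
    simpa using cc_le σ
  rw [← Finset.sum_fiberwise_of_maps_to hmaps (fun σ => (cycleCount σ : ℝ))]
  apply Finset.sum_congr rfl
  intro k hk
  have hk' : Even k := (Finset.mem_filter.1 hk).2
  rw [Finset.filter_filter]
  have hfe : Finset.filter (fun σ : Perm (Fin m) => Even (cycleCount σ) ∧ cycleCount σ = k)
      Finset.univ = Finset.filter (fun σ => cycleCount σ = k) Finset.univ := by
    ext σ
    simp only [Finset.mem_filter, Finset.mem_univ, true_and]
    exact ⟨fun h => h.2, fun h => ⟨h ▸ hk', h⟩⟩
  rw [hfe]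
  rw [Finset.sum_congr rfl (fun σ hσ => by
    rw [(Finset.mem_filter.1 hσ).2] : ∀ σ ∈ Finset.filter
      (fun σ : Perm (Fin m) => cycleCount σ = k) Finset.univ, (cycleCount σ : ℝ) = (k : ℝ))]
  rw [Finset.sum_const, nsmul_eq_mul, stirling1]
  ring

theorem stirling_even_weighted_sum_aux (n : ℕ) (hn : 1 ≤ n) :
    ∑ k ∈ (Finset.Icc 1 (n + 1)).filter (fun k => Even k),
        (k : ℝ) * (stirling1 (n + 1) k : ℝ) =
      ((Nat.factorial (n + 1) : ℝ) / 2) *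
        (1 / ((n : ℝ) * ((n : ℝ) + 1)) + Hsum (n + 1)) := by
  rw [fiber_sum (n + 1) (by omega), even_sum, Ssum_eq]
  have hT : Tsum (n + 1) = ((n - 1).factorial : ℝ) := by
    have h : n - 1 + 2 = n + 1 := by omega
    rw [← h, Tsum_eq]
  rw [hT]
  have hfact : Nat.factorial (n + 1) = (n - 1).factorial * n * (n + 1) := by
    have h : n = (n - 1) + 1 := by omega
    rw [Nat.factorial_succ, mul_comm]
    congr 1
    rw [h, Nat.factorial_succ, mul_comm, ← h]
  rw [hfact]
  push_cast
  have h1 : (n : ℝ) ≠ 0 := Nat.cast_ne_zero.2 (by omega)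
  have h2 : (n : ℝ) + 1 ≠ 0 := by positivity
  field_simp
  ring

end Aux

/-- `∑_{k even, 1 ≤ k ≤ n+1} k·c(n+1,k) = ((n+1)!/2)(1/(n(n+1)) + H_{n+1})`. -/
theorem stirling_even_weighted_sum (n : ℕ) (hn : 1 ≤ n) :
    ∑ k ∈ (Finset.Icc 1 (n + 1)).filter (fun k => Even k),
        (k : ℝ) * (stirling1 (n + 1) k : ℝ) =
      ((Nat.factorial (n + 1) : ℝ) / 2) *
        (1 / ((n : ℝ) * ((n : ℝ) + 1)) + Hsum (n + 1)) := by
  exact stirling_even_weighted_sum_aux n hn
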